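/- Let K be a field equipped with a nonarchimedean (multiplicative) absolute value |·|, let m ∈ ℕ, and let ρ : Fin m → (0,1] be a weight function. Define the weighted Gauss norm on the multivariate polynomial ring K[X_1,…,X_m] by ‖f‖_ρ := max_μ |c_μ| · ∏_i ρ_i^{μ_i}, where f = Σ_μ c_μ X^μ. Then ‖·‖_ρ is multiplicative: ‖fg‖_ρ = ‖f‖_ρ · ‖g‖_ρ for all f, g ∈ K[X_1,…,X_m]. -/

import Mathlib

open MvPolynomial
open scoped NNReal

private lemma vsum_le {K : Type*} [Field K] (v : AbsoluteValue K ℝ≥0)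
    (hna : ∀ x y : K, v (x + y) ≤ max (v x) (v y)) {α : Type*} (s : Finset α) (h : α → K) :
    v (∑ x ∈ s, h x) ≤ s.sup (fun x => v (h x)) := by
  induction s using Finset.cons_induction with
  | empty => simp
  | cons a s ha ih =>
    rw [Finset.sum_cons, Finset.sup_cons]
    exact (hna _ _).trans (max_le_max le_rfl ih)

private lemma v_add_eq {K : Type*} [Field K] (v : AbsoluteValue K ℝ≥0)
    (hna : ∀ x y : K, v (x + y) ≤ max (v x) (v y)) {a b : K} (h : v b < v a) :
    v (a + b) = v a := by
  have hm1 : v (-1 : K) = 1 := by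
    have h1 : v (-1 : K) * v (-1 : K) = 1 := by
      rw [← v.map_mul, neg_mul_neg, one_mul]
      exact v.map_one_of_isLeftRegular (isRegular_of_ne_zero (v.ne_zero one_ne_zero)).left
    rcases lt_trichotomy (v (-1 : K)) 1 with hlt | heq | hgt
    · have := mul_self_lt_mul_self zero_le hlt
      rw [h1, one_mul] at this
      exact absurd this (lt_irrefl _)
    · exact heq
    · have := mul_self_lt_mul_self zero_le hgt
      rw [h1, one_mul] at this
      exact absurd this (lt_irrefl _)
  have hneg : ∀ c : K, v (-c) = v c := by
    intro c
    rw [show (-c) = (-1) * c by ring, v.map_mul, hm1, one_mul]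
  refine le_antisymm ((hna a b).trans (max_le le_rfl h.le)) ?_
  have h2 := hna (a + b) (-b)
  rw [add_neg_cancel_right, hneg] at h2
  rcases le_total (v (a + b)) (v b) with hc | hc
  · exact absurd (h2.trans (max_le hc le_rfl)) h.not_ge
  · exact h2.trans (max_le le_rfl hc)

/-- The weighted Gauss norm `‖f‖_ρ = max_μ |c_μ| ∏_i ρ_i^{μ_i}` (weights `ρ_i ∈ (0,1]`)
associated to a nonarchimedean absolute value on a field `K` is multiplicative on the
polynomial ring `K[X_1,…,X_m]`. -/
theorem weighted_gauss_norm_mul {K : Type*} [Field K] (m : ℕ)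
    (v : AbsoluteValue K ℝ≥0) (hna : ∀ x y : K, v (x + y) ≤ max (v x) (v y))
    (p : Fin m → ℝ≥0) (hp : ∀ i, 0 < p i ∧ p i ≤ 1)
    (f g : MvPolynomial (Fin m) K) :
    (f * g).support.sup (fun μ => v (coeff μ (f * g)) * ∏ i, p i ^ μ i)
      = (f.support.sup fun μ => v (coeff μ f) * ∏ i, p i ^ μ i)
        * (g.support.sup fun μ => v (coeff μ g) * ∏ i, p i ^ μ i) := by
  classical
  let w : (Fin m →₀ ℕ) → ℝ≥0 := fun μ => ∏ i, p i ^ μ i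
  have hw_pos : ∀ μ, 0 < w μ := fun μ => Finset.prod_pos (fun i _ => pow_pos (hp i).1 _)
  have hw_add : ∀ μ ν : Fin m →₀ ℕ, w (μ + ν) = w μ * w ν := by
    intro μ ν
    simp only [w, Finsupp.add_apply, pow_add, Finset.prod_mul_distrib]
  show (f * g).support.sup (fun μ => v (coeff μ (f * g)) * w μ)
      = (f.support.sup fun μ => v (coeff μ f) * w μ)
        * (g.support.sup fun μ => v (coeff μ g) * w μ)
  have hle : ∀ (h : MvPolynomial (Fin m) K) (μ : Fin m →₀ ℕ),
      v (coeff μ h) * w μ ≤ h.support.sup (fun μ => v (coeff μ h) * w μ) := by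
    intro h μ
    by_cases hm : μ ∈ h.support
    · exact Finset.le_sup (f := fun μ => v (coeff μ h) * w μ) hm
    · rw [MvPolynomial.notMem_support_iff.mp hm, map_zero, zero_mul]
      exact zero_le
  rcases eq_or_ne f 0 with rfl | hf
  · simp
  rcases eq_or_ne g 0 with rfl | hg
  · simp
  set Nf := f.support.sup (fun μ => v (coeff μ f) * w μ) with hNfdef
  set Ng := g.support.sup (fun μ => v (coeff μ g) * w μ) with hNgdef
  have hNpos : ∀ (h : MvPolynomial (Fin m) K), h ≠ 0 →
      0 < h.support.sup (fun μ => v (coeff μ h) * w μ) := by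
    intro h hh
    obtain ⟨μ, hμ⟩ := support_nonempty.mpr hh
    exact lt_of_lt_of_le (mul_pos (v.pos (mem_support_iff.mp hμ)) (hw_pos μ)) (Finset.le_sup (f := fun μ => v (coeff μ h) * w μ) hμ)
  have hNf : 0 < Nf := hNpos f hf
  have hNg : 0 < Ng := hNpos g hg
  -- upper bound direction
  have hub : ∀ σ, v (coeff σ (f * g)) * w σ ≤ Nf * Ng := by
    intro σ
    rw [coeff_mul]
    calc v (∑ x ∈ Finset.HasAntidiagonal.antidiagonal σ, coeff x.1 f * coeff x.2 g) * w σ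
        ≤ (Finset.HasAntidiagonal.antidiagonal σ).sup (fun x => v (coeff x.1 f * coeff x.2 g)) * w σ :=
          mul_le_mul_left (vsum_le v hna _ _) _
      _ ≤ Nf * Ng := by
          rw [← le_div_iff₀ (hw_pos σ)]
          refine Finset.sup_le fun x hx => ?_
          rw [le_div_iff₀ (hw_pos σ)]
          have hx' : x.1 + x.2 = σ := Finset.HasAntidiagonal.mem_antidiagonal.mp hx
          calc v (coeff x.1 f * coeff x.2 g) * w σ
              = (v (coeff x.1 f) * w x.1) * (v (coeff x.2 g) * w x.2) := by
                rw [v.map_mul, ← hx', hw_add]; ring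
            _ ≤ Nf * Ng := mul_le_mul' (hle f x.1) (hle g x.2)
  -- choose lex-maximal maximizers
  have key : ∀ (h : MvPolynomial (Fin m) K), h ≠ 0 → ∃ μ₀,
      v (coeff μ₀ h) * w μ₀ = h.support.sup (fun μ => v (coeff μ h) * w μ) ∧
      ∀ μ, toLex μ₀ < toLex μ →
        v (coeff μ h) * w μ < h.support.sup (fun μ => v (coeff μ h) * w μ) := by
    intro h hh
    have hsupp : h.support.Nonempty := support_nonempty.mpr hh
    have hNh : 0 < h.support.sup (fun μ => v (coeff μ h) * w μ) := hNpos h hh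
    obtain ⟨μ₁, hμ₁, hμ₁eq⟩ := Finset.exists_mem_eq_sup h.support hsupp
      (fun μ => v (coeff μ h) * w μ)
    set T := h.support.filter
      (fun μ => v (coeff μ h) * w μ = h.support.sup (fun μ => v (coeff μ h) * w μ)) with hT
    have hTne : T.Nonempty := ⟨μ₁, Finset.mem_filter.mpr ⟨hμ₁, hμ₁eq.symm⟩⟩
    obtain ⟨μ₀, hμ₀T, hμ₀max⟩ := Finset.exists_max_image T toLex hTne
    refine ⟨μ₀, (Finset.mem_filter.mp hμ₀T).2, fun μ hlt => ?_⟩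
    rcases lt_or_eq_of_le (hle h μ) with h' | h'
    · exact h'
    · exfalso
      have hμs : μ ∈ h.support := by
        rw [mem_support_iff]
        intro h0
        rw [h0] at h'
        simp only [map_zero, zero_mul] at h'
        exact hNh.ne h'
      exact hlt.not_ge (hμ₀max μ (Finset.mem_filter.mpr ⟨hμs, h'⟩))
  obtain ⟨μ₀, hμ₀, hμ₀lt⟩ := key f hf
  obtain ⟨ν₀, hν₀, hν₀lt⟩ := key g hg
  set σ := μ₀ + ν₀ with hσ
  have hmain : v (coeff μ₀ f * coeff ν₀ g) * w σ = Nf * Ng := by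
    rw [v.map_mul, hσ, hw_add, hNfdef, hNgdef, ← hμ₀, ← hν₀]; ring
  have hmainpos : 0 < v (coeff μ₀ f * coeff ν₀ g) := by
    rcases (zero_le : 0 ≤ v (coeff μ₀ f * coeff ν₀ g)).lt_or_eq with h' | h'
    · exact h'
    · exfalso
      have h'' := hmain
      rw [← h', zero_mul] at h''
      exact (mul_pos hNf hNg).ne h''
  have hrest : ∀ x ∈ (Finset.HasAntidiagonal.antidiagonal σ).erase (μ₀, ν₀),
      v (coeff x.1 f * coeff x.2 g) < v (coeff μ₀ f * coeff ν₀ g) := by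
    intro x hx
    obtain ⟨hxne, hxad⟩ := Finset.mem_erase.mp hx
    have hsum : x.1 + x.2 = σ := Finset.HasAntidiagonal.mem_antidiagonal.mp hxad
    have hterm : (v (coeff x.1 f) * w x.1) * (v (coeff x.2 g) * w x.2) < Nf * Ng := by
      rcases lt_trichotomy (toLex x.1) (toLex μ₀) with h1 | h1 | h1
      · have h2 : toLex ν₀ < toLex x.2 := by
          by_contra h2
          push_neg at h2
          have hlt : toLex x.1 + toLex x.2 < toLex μ₀ + toLex ν₀ :=
            add_lt_add_of_lt_of_le h1 h2
          rw [← toLex_add, ← toLex_add, hsum, hσ] at hlt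
          exact lt_irrefl _ hlt
        calc (v (coeff x.1 f) * w x.1) * (v (coeff x.2 g) * w x.2)
            ≤ Nf * (v (coeff x.2 g) * w x.2) := mul_le_mul_left (hle f x.1) _
          _ < Nf * Ng := mul_lt_mul_of_pos_left (hν₀lt x.2 h2) hNf
      · have hx1 : x.1 = μ₀ := toLex.injective h1
        have hx2 : x.2 = ν₀ := by
          have h3 := hsum
          rw [hx1, hσ] at h3
          exact add_left_cancel h3
        exact absurd (Prod.ext hx1 hx2) hxne
      · calc (v (coeff x.1 f) * w x.1) * (v (coeff x.2 g) * w x.2)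
            ≤ (v (coeff x.1 f) * w x.1) * Ng := mul_le_mul_right (hle g x.2) _
          _ < Nf * Ng := mul_lt_mul_of_pos_right (hμ₀lt x.1 h1) hNg
    have h3 : v (coeff x.1 f * coeff x.2 g) * w σ < v (coeff μ₀ f * coeff ν₀ g) * w σ := by
      rw [hmain, v.map_mul, ← hsum, hw_add]
      calc v (coeff x.1 f) * v (coeff x.2 g) * (w x.1 * w x.2)
          = (v (coeff x.1 f) * w x.1) * (v (coeff x.2 g) * w x.2) := by ring
        _ < Nf * Ng := hterm
    exact lt_of_mul_lt_mul_right h3 zero_le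
  have hmem : (μ₀, ν₀) ∈ Finset.HasAntidiagonal.antidiagonal σ := Finset.HasAntidiagonal.mem_antidiagonal.mpr rfl
  have hsplit : coeff σ (f * g)
      = coeff μ₀ f * coeff ν₀ g
        + ∑ x ∈ (Finset.HasAntidiagonal.antidiagonal σ).erase (μ₀, ν₀), coeff x.1 f * coeff x.2 g := by
    rw [coeff_mul, ← Finset.add_sum_erase _ _ hmem]
  have hvrest : v (∑ x ∈ (Finset.HasAntidiagonal.antidiagonal σ).erase (μ₀, ν₀), coeff x.1 f * coeff x.2 g)
      < v (coeff μ₀ f * coeff ν₀ g) :=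
    lt_of_le_of_lt (vsum_le v hna _ _)
      ((Finset.sup_lt_iff (show (⊥ : ℝ≥0) < _ from hmainpos)).mpr hrest)
  have hvσ : v (coeff σ (f * g)) = v (coeff μ₀ f * coeff ν₀ g) := by
    rw [hsplit]; exact v_add_eq v hna hvrest
  have hσmem : σ ∈ (f * g).support := by
    rw [mem_support_iff]
    intro h0
    rw [h0, map_zero] at hvσ
    exact hmainpos.ne hvσ
  refine le_antisymm (Finset.sup_le fun σ' _ => hub σ') ?_
  calc Nf * Ng = v (coeff σ (f * g)) * w σ := by rw [hvσ, hmain]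
    _ ≤ _ := Finset.le_sup (f := fun μ => v (coeff μ (f * g)) * w μ) hσmem
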